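/- Let X and X' be i.i.d. random variables in [0,1] with variance σ², and let ε > 0, δ ∈ (0,1), k ≥ 1. If σ² ≤ (ε/4)·(ε/log(2k/δ) − 2/3), then P(|X − X'| ≥ ε) ≤ δ/k. -/

import Mathlib

open MeasureTheory ProbabilityTheory

lemma exp_le_four_mul {L : ℝ} (h1 : Real.log 2 ≤ L) (h2 : L ≤ 3/2) :
    Real.exp L ≤ 4 * L := by
  set a := Real.log 2 with ha
  have hab : a < 3/2 := lt_of_lt_of_le Real.log_two_lt_d9 (by norm_num)
  have hc : (0:ℝ) < 3/2 - a := by linarith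
  set s := (3/2 - L) / (3/2 - a) with hs
  set t := (L - a) / (3/2 - a) with ht
  have hs0 : 0 ≤ s := div_nonneg (by linarith) hc.le
  have ht0 : 0 ≤ t := div_nonneg (by linarith) hc.le
  have hst : s + t = 1 := by
    rw [hs, ht, ← add_div, div_eq_one_iff_eq hc.ne']; ring
  have key := convexOn_exp.2 (Set.mem_univ a) (Set.mem_univ (3/2)) hs0 ht0 hst
  have hL : s • a + t • (3/2 : ℝ) = L := by
    rw [smul_eq_mul, smul_eq_mul, hs, ht, div_mul_eq_mul_div, div_mul_eq_mul_div,
      ← add_div, div_eq_iff hc.ne']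
    ring
  rw [hL] at key
  have hexpa : Real.exp a = 2 := Real.exp_log (by norm_num)
  have hexp32 : Real.exp (3/2) < 4.5 := by
    have h3 : Real.exp 3 < 20.25 := by
      calc Real.exp 3 = (Real.exp 1) ^ 3 := by
            rw [← Real.exp_nat_mul]; norm_num
        _ < 2.7182818286 ^ 3 :=
            pow_lt_pow_left₀ Real.exp_one_lt_d9 (Real.exp_pos 1).le (by norm_num)
        _ < 20.25 := by norm_num
    nlinarith [Real.exp_pos (3/2 : ℝ), sq_nonneg (Real.exp (3/2) - 4.5),
      (by rw [← Real.exp_add]; norm_num : Real.exp (3/2) * Real.exp (3/2) = Real.exp 3)]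
  have hlog2lb : (0.6931471803 : ℝ) < a := Real.log_two_gt_d9
  have hlog2ub : a < 0.6931471808 := Real.log_two_lt_d9
  have : Real.exp L ≤ s * 2 + t * Real.exp (3/2) := by
    simpa [hexpa, smul_eq_mul] using key
  have hchord : s * 2 + t * Real.exp (3/2) ≤ 4 * L := by
    rw [hs, ht, div_mul_eq_mul_div, div_mul_eq_mul_div, ← add_div,
      div_le_iff₀ hc]
    nlinarith [hexp32, Real.exp_pos (3/2:ℝ)]
  linarith

/-- Lemma 1 of the paper: if the variance of two i.i.d. `[0,1]`-valued random variables
is below the stated threshold, the difference exceeds ε with probability at most δ/k. -/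
theorem stmt2 {Ω : Type*} [MeasureSpace Ω] [IsProbabilityMeasure (ℙ : Measure Ω)]
    (X X' : Ω → ℝ) (hInd : IndepFun X X' ℙ) (hId : IdentDistrib X X' ℙ ℙ)
    (hmX : Measurable X) (hmX' : Measurable X')
    (hbX : ∀ ω, X ω ∈ Set.Icc (0 : ℝ) 1) (hbX' : ∀ ω, X' ω ∈ Set.Icc (0 : ℝ) 1)
    (ε δ k : ℝ) (hε : 0 < ε) (hδ : δ ∈ Set.Ioo (0 : ℝ) 1) (hk : 1 ≤ k)
    (hlog : 0 < Real.log (2 * k / δ))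
    (hvar : variance X ℙ ≤ ε / 4 * (ε / Real.log (2 * k / δ) - 2 / 3)) :
    (ℙ {ω | ε ≤ |X ω - X' ω|}).toReal ≤ δ / k := by
  set L := Real.log (2 * k / δ) with hLdef
  obtain ⟨hδ0, hδ1⟩ := hδ
  have hk0 : (0:ℝ) < k := lt_of_lt_of_le one_pos hk
  have hdk : 0 < δ / k := div_pos hδ0 hk0
  -- From nonnegativity of the variance, `ε ≥ (2/3) L`.
  have h0 : 0 ≤ ε / 4 * (ε / L - 2/3) := le_trans (variance_nonneg X ℙ) hvar
  have hfac : 0 ≤ ε / L - 2/3 := by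
    by_contra h
    push_neg at h
    nlinarith [mul_neg_of_pos_of_neg (by positivity : (0:ℝ) < ε/4) h]
  have hεL : 2/3 * L ≤ ε := by
    have := (le_div_iff₀ hlog).mp (by linarith : (2:ℝ)/3 ≤ ε / L)
    linarith
  by_cases hL32 : 3/2 < L
  · -- then ε > 1 and the event is empty
    have hε1 : 1 < ε := by linarith
    have hset : {ω | ε ≤ |X ω - X' ω|} = ∅ := by
      rw [Set.eq_empty_iff_forall_notMem]
      intro ω hω
      obtain ⟨h1, h2⟩ := hbX ω
      obtain ⟨h3, h4⟩ := hbX' ω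
      have : |X ω - X' ω| ≤ 1 := by rw [abs_le]; constructor <;> linarith
      have : ε ≤ 1 := le_trans hω this
      linarith
    rw [hset, measure_empty, ENNReal.toReal_zero]
    exact hdk.le
  · push_neg at hL32
    -- L ∈ [log 2, 3/2]
    have hpos : (0:ℝ) < 2 * k / δ := by positivity
    have hlog2L : Real.log 2 ≤ L := by
      rw [hLdef]
      apply Real.log_le_log (by norm_num)
      rw [le_div_iff₀ hδ0]
      nlinarith
    -- From convexity: exp L ≤ 4 L, hence k ≤ 2 L δ
    have hexpL : Real.exp L = 2 * k / δ := by rw [hLdef, Real.exp_log hpos]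
    have hkL : k ≤ 2 * L * δ := by
      have h4 := exp_le_four_mul hlog2L hL32
      rw [hexpL, div_le_iff₀ hδ0] at h4
      linarith
    -- variance bound multiplied through by L
    have hvL : variance X ℙ * L ≤ ε ^ 2 / 4 - ε * L / 6 := by
      have hm := mul_le_mul_of_nonneg_right hvar hlog.le
      have hrhs : ε / 4 * (ε / L - 2/3) * L = ε ^ 2 / 4 - ε * L / 6 := by
        field_simp
        ring
      linarith [hrhs ▸ hm]
    -- Chebyshev for Y = X - X'
    have hX2 : MemLp X 2 ℙ := memLp_of_bounded (Filter.Eventually.of_forall hbX)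
      hmX.aestronglyMeasurable 2
    have hX'2 : MemLp X' 2 ℙ := memLp_of_bounded (Filter.Eventually.of_forall hbX')
      hmX'.aestronglyMeasurable 2
    have hiX : Integrable X ℙ := hX2.integrable one_le_two
    have hiX' : Integrable X' ℙ := hX'2.integrable one_le_two
    have hIndn : IndepFun X (-X') ℙ := hInd.neg_right
    have hvadd : variance (X + -X') ℙ = variance X ℙ + variance (-X') ℙ :=
      hIndn.variance_add hX2 hX'2.neg
    have hvneg : variance (-X') ℙ = variance X' ℙ := by
      rw [show -X' = (-1 : ℝ) • X' from by funext ω; simp, variance_smul]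
      norm_num
    have hvX' : variance X' ℙ = variance X ℙ := hId.variance_eq.symm
    have hvY : variance (X + -X') ℙ = 2 * variance X ℙ := by
      rw [hvadd, hvneg, hvX']; ring
    have hmean : (∫ ω, (X + -X') ω ∂ℙ) = 0 := by
      simp only [Pi.add_apply, Pi.neg_apply, ← sub_eq_add_neg]
      rw [integral_sub hiX hiX', hId.integral_eq, sub_self]
    have hcheb := meas_ge_le_variance_div_sq (μ := ℙ) (hX2.add hX'2.neg) hε
    rw [hvY] at hcheb
    have hset : {ω | ε ≤ |(X + -X') ω - (∫ ω, (X + -X') ω ∂ℙ)|}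
        = {ω | ε ≤ |X ω - X' ω|} := by
      rw [hmean]
      ext ω
      simp [sub_eq_add_neg]
    rw [hset] at hcheb
    have hnum : (0:ℝ) ≤ 2 * variance X ℙ / ε ^ 2 :=
      div_nonneg (by nlinarith [variance_nonneg X ℙ]) (sq_nonneg ε)
    have hfinal : 2 * variance X ℙ / ε ^ 2 ≤ δ / k := by
      rw [div_le_div_iff₀ (by positivity) hk0]
      nlinarith [mul_le_mul_of_nonneg_left hkL
          (by nlinarith [variance_nonneg X ℙ] : (0:ℝ) ≤ 2 * variance X ℙ),
        mul_le_mul_of_nonneg_left hvL (by positivity : (0:ℝ) ≤ 4 * δ),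
        mul_nonneg (mul_nonneg hδ0.le hε.le) hlog.le, variance_nonneg X ℙ]
    exact le_trans (ENNReal.toReal_le_of_le_ofReal hnum hcheb) hfinal
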